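/- Let n ≥ 3, l ≥ 1, and let b = (x_1,…,x_n, x_0, x̄_n,…,x̄_1) be an element of the level-l B_n^{(1)} perfect crystal B_l. Then ε_0(b) + ε_1(b) + 2·Σ_{i=2}^{n−1} ε_i(b) + ε_n(b) ≥ l, and likewise φ_0(b) + φ_1(b) + 2·Σ_{i=2}^{n−1} φ_i(b) + φ_n(b) ≥ l. (This is the perfectness condition ⟨c, ε(b)⟩ ≥ l.) -/
import Mathlib


def phi0 (x xb : ℕ → ℕ) : ℕ := xb 1 + (xb 2 - x 2)
def eps0 (x xb : ℕ → ℕ) : ℕ := x 1 + (x 2 - xb 2)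
def phiMid (x xb : ℕ → ℕ) (i : ℕ) : ℕ := x i + (xb (i + 1) - x (i + 1))
def epsMid (x xb : ℕ → ℕ) (i : ℕ) : ℕ := xb i + (x (i + 1) - xb (i + 1))
def phiN (n : ℕ) (x : ℕ → ℕ) (x0 : ℕ) : ℕ := 2 * x n + x0
def epsN (n : ℕ) (xb : ℕ → ℕ) (x0 : ℕ) : ℕ := 2 * xb n + x0

private lemma key_reindex (a b : ℕ → ℕ) :
    ∀ n, 2 ≤ n →
      (a 2 - b 2) + ∑ i ∈ Finset.Icc 2 (n - 1), (b i + (a (i + 1) - b (i + 1))) + b n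
        = ∑ i ∈ Finset.Icc 2 n, (b i + (a i - b i)) := by
  intro n
  induction n with
  | zero => omega
  | succ m ih =>
    intro h
    rcases Nat.lt_or_ge m 2 with hm | hm
    · interval_cases m
      · omega
      · simp [Finset.Icc_self]
        omega
    · obtain ⟨k, rfl⟩ : ∃ k, m = k + 1 := ⟨m - 1, by omega⟩
      have h1 : k + 1 + 1 - 1 = k + 1 := by omega
      rw [h1, Finset.sum_Icc_succ_top (by omega : 2 ≤ k + 1),
          Finset.sum_Icc_succ_top (by omega : 2 ≤ k + 1 + 1)]
      have := ih hm
      simp only [Nat.add_sub_cancel] at this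
      omega

private lemma key_main (n : ℕ) (hn : 3 ≤ n) (a b : ℕ → ℕ) (x0 : ℕ) :
    a 1 + (a 2 - b 2) + (b 1 + (a 2 - b 2))
      + 2 * ∑ i ∈ Finset.Icc 2 (n - 1), (b i + (a (i + 1) - b (i + 1)))
      + (2 * b n + x0)
    ≥ x0 + ∑ i ∈ Finset.Icc 1 n, (a i + b i) := by
  have hsplit : ∑ i ∈ Finset.Icc 1 n, (a i + b i)
      = (a 1 + b 1) + ∑ i ∈ Finset.Icc 2 n, (a i + b i) := by
    have h1 : Finset.Icc 1 n = insert 1 (Finset.Icc 2 n) := by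
      ext j; simp [Finset.mem_Icc]; omega
    rw [h1, Finset.sum_insert (by simp)]
  have hkey := key_reindex a b n (by omega)
  have hpt : ∑ i ∈ Finset.Icc 2 n, (a i + b i)
      ≤ 2 * ∑ i ∈ Finset.Icc 2 n, (b i + (a i - b i)) := by
    rw [Finset.mul_sum]
    exact Finset.sum_le_sum (fun i _ => by omega)
  omega

theorem stmt_5 (n l : ℕ) (hn : 3 ≤ n) (hl : 1 ≤ l)
    (x xb : ℕ → ℕ) (x0 : ℕ) (hx0 : x0 ≤ 1)
    (hsum : x0 + ∑ i ∈ Finset.Icc 1 n, (x i + xb i) = l) :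
    (eps0 x xb + epsMid x xb 1 + 2 * ∑ i ∈ Finset.Icc 2 (n - 1), epsMid x xb i
        + epsN n xb x0 ≥ l) ∧
    (phi0 x xb + phiMid x xb 1 + 2 * ∑ i ∈ Finset.Icc 2 (n - 1), phiMid x xb i
        + phiN n x x0 ≥ l) := by
  subst hsum
  constructor
  · have := key_main n hn x xb x0
    simp only [eps0, epsMid, epsN]
    norm_num at this ⊢
    omega
  · have := key_main n hn xb x x0
    simp only [phi0, phiMid, phiN]
    have hc : ∑ i ∈ Finset.Icc 1 n, (xb i + x i) = ∑ i ∈ Finset.Icc 1 n, (x i + xb i) :=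
      Finset.sum_congr rfl (fun i _ => Nat.add_comm _ _)
    norm_num at this ⊢
    omega
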